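/- Let p be an odd prime, n a positive integer, q = pⁿ with q ≡ 3 (mod 4), and K a finite field with q² elements with F its subfield of order q. Let k be an integer with 0 < k < n and n/gcd(k,n) odd, let b be a nonsquare in K \ {0}, and fix ξ ∈ K \ F. Define f : K → K by f(x) = b x^{p^k+1} + (b x^{p^k+1})^q + ξ x^{q+1} (the planar function of a Budaghyan–Helleseth semifield). Then for all a, c ∈ K the number of x ∈ K with f(x+a) − c ∈ ξF equals 1 if c ∈ ξF and equals q+1 if c ∉ ξF; hence U_ξ = {(x, tξ) : x ∈ K, t ∈ F} ∪ {(∞)} is a unital in the Budaghyan–Helleseth semifield plane Π(f). In particular, for every a ∈ F the number of y ∈ K with by² + (by²)^q = a equals q+1 if a ≠ 0 and equals 1 if a = 0. -/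

import Mathlib

open Finset Polynomial

/-- divisibility of `a^m - 1` via `ZMod`. -/
lemma dvd_pow_sub_one_iff {r a m : ℕ} (ha : 1 ≤ a) :
    r ∣ a ^ m - 1 ↔ ((a : ZMod r)) ^ m = 1 := by
  have h1 : 1 ≤ a ^ m := Nat.one_le_pow _ _ ha
  rw [← ZMod.natCast_eq_zero_iff, Nat.cast_sub h1, Nat.cast_pow, Nat.cast_one,
    sub_eq_zero]

lemma dvd_gcd_pow_sub_one {r a m n : ℕ} (ha : 2 ≤ a) (hm : 0 < m) (hn : 0 < n)
    (h1 : r ∣ a ^ m - 1) (h2 : r ∣ a ^ n - 1) : r ∣ a ^ Nat.gcd m n - 1 := by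
  rcases Nat.eq_zero_or_pos r with rfl | hr
  · -- r = 0 : a ^ m = 1 impossible unless ... a^m - 1 = 0 means a ^ m = 1, a ≥ 2, m>0: contradiction
    have := Nat.eq_zero_of_zero_dvd h1
    have h4 : 1 < a ^ m := Nat.one_lt_pow hm.ne' ha
    omega
  have ha1 : 1 ≤ a := by omega
  haveI : NeZero r := ⟨hr.ne'⟩
  have hcop : Nat.Coprime a r := by
    have hd : Nat.gcd a r ∣ 1 := by
      have g1 : Nat.gcd a r ∣ a ^ m := dvd_pow (Nat.gcd_dvd_left a r) hm.ne'
      have g2 : Nat.gcd a r ∣ a ^ m - 1 := (Nat.gcd_dvd_right a r).trans h1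
      have h1m : 1 ≤ a ^ m := Nat.one_le_pow _ _ ha1
      have := Nat.dvd_sub g1 g2
      simpa [Nat.sub_sub_self h1m] using this
    simpa [Nat.Coprime] using Nat.eq_one_of_dvd_one hd
  set u : (ZMod r)ˣ := ZMod.unitOfCoprime a hcop with hu
  have hum : u ^ m = 1 := by
    ext
    push_cast [hu]
    rw [ZMod.coe_unitOfCoprime]
    exact (dvd_pow_sub_one_iff ha1).mp h1
  have hun : u ^ n = 1 := by
    ext
    push_cast [hu]
    rw [ZMod.coe_unitOfCoprime]
    exact (dvd_pow_sub_one_iff ha1).mp h2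
  have hord : orderOf u ∣ Nat.gcd m n :=
    Nat.dvd_gcd (orderOf_dvd_of_pow_eq_one hum) (orderOf_dvd_of_pow_eq_one hun)
  have hug : u ^ Nat.gcd m n = 1 := orderOf_dvd_iff_pow_eq_one.mp hord
  rw [dvd_pow_sub_one_iff ha1]
  have := congrArg (Units.val) hug
  push_cast at this
  rwa [ZMod.coe_unitOfCoprime] at this

lemma sq_sub_one_fac (A : ℕ) (hA : 1 ≤ A) : (A + 1) * (A - 1) = A ^ 2 - 1 := by
  have h2 : 1 ≤ A ^ 2 := Nat.one_le_pow _ _ hA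
  zify [hA, h2]; ring

lemma pow_mod4_even (x j : ℕ) (hx : x % 4 = 3) (hj : Even j) : x ^ j % 4 = 1 := by
  obtain ⟨i, rfl⟩ := hj
  rw [Nat.pow_mod, hx]
  have : 3 ^ (i + i) = 9 ^ i := by
    rw [show (9:ℕ) = 3 ^ 2 by norm_num, ← pow_mul]; ring
  rw [this, Nat.pow_mod]
  norm_num

lemma pow_mod4_odd (x j : ℕ) (hx : x % 4 = 3) (hj : Odd j) : x ^ j % 4 = 3 := by
  obtain ⟨i, rfl⟩ := hj
  rw [Nat.pow_mod, hx, pow_succ]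
  have : 3 ^ (2 * i) = 9 ^ i := by
    rw [show (9:ℕ) = 3 ^ 2 by norm_num, ← pow_mul]
  rw [Nat.mul_mod, this, Nat.pow_mod]
  norm_num

lemma n_odd_p3 (p n : ℕ) (hpodd : Odd p) (hn : 0 < n) (hq4 : p ^ n % 4 = 3) :
    Odd n ∧ p % 4 = 3 := by
  have hp2 : p % 2 = 1 := Nat.odd_iff.mp hpodd
  have hp4 : p % 4 = 1 ∨ p % 4 = 3 := by omega
  rcases hp4 with h | h
  · exfalso
    have : p ^ n % 4 = 1 := by
      rw [Nat.pow_mod, h, one_pow]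
      norm_num
    omega
  · refine ⟨?_, h⟩
    by_contra hodd
    have he : Even n := Nat.not_odd_iff_even.mp hodd
    have := pow_mod4_even p n h he
    omega

lemma gcd_two_k_n (k n : ℕ) (hk : 0 < k) (hn : 0 < n) (hkodd : Odd (n / Nat.gcd k n)) :
    Nat.gcd (2 * k) n = Nat.gcd k n := by
  set d := Nat.gcd k n with hd
  have hd0 : 0 < d := Nat.gcd_pos_of_pos_left n hk
  set e := Nat.gcd (2 * k) n with he
  have hde : d ∣ e := Nat.dvd_gcd ((Nat.gcd_dvd_left k n).trans (dvd_mul_left k 2))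
    (Nat.gcd_dvd_right k n)
  have he2d : e ∣ 2 * d := by
    have : e ∣ Nat.gcd (2 * k) (2 * n) :=
      Nat.dvd_gcd (Nat.gcd_dvd_left _ _) ((Nat.gcd_dvd_right _ _).trans (dvd_mul_left n 2))
    rwa [Nat.gcd_mul_left] at this
  obtain ⟨t, ht⟩ := hde
  have ht2 : t ∣ 2 := by
    have : d * t ∣ d * 2 := by rw [← ht, mul_comm d 2]; exact he2d
    exact (mul_dvd_mul_iff_left hd0.ne').mp this
  have ht12 : t = 1 ∨ t = 2 := (Nat.dvd_prime Nat.prime_two).mp ht2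
  rcases ht12 with rfl | rfl
  · omega
  · exfalso
    have h2dn : 2 * d ∣ n := by rw [show 2 * d = e by omega]; exact Nat.gcd_dvd_right _ _
    obtain ⟨s, hs⟩ := h2dn
    rw [show 2 * d * s = d * (2 * s) by ring] at hs
    have hnd : n / d = 2 * s := by rw [hs, Nat.mul_div_cancel_left _ hd0]
    rw [hnd] at hkodd
    have := Nat.odd_iff.mp hkodd
    omega

lemma gcd_pk_qsub (p k n : ℕ) (hp : 2 ≤ p) (hpodd : Odd p) (hk : 0 < k) (hn : 0 < n)
    (hkodd : Odd (n / Nat.gcd k n)) : Nat.gcd (p ^ k + 1) (p ^ n - 1) = 2 := by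
  set r := Nat.gcd (p ^ k + 1) (p ^ n - 1) with hr
  have hA : 1 ≤ p ^ k := Nat.one_le_pow _ _ (by omega)
  have hAn : 1 ≤ p ^ n := Nat.one_le_pow _ _ (by omega)
  have hr2k : r ∣ p ^ (2 * k) - 1 := by
    refine (Nat.gcd_dvd_left _ _).trans ?_
    have : (p ^ k + 1) * (p ^ k - 1) = p ^ (2 * k) - 1 := by
      rw [show p ^ (2*k) = (p ^ k) ^ 2 by rw [← pow_mul, mul_comm]]
      exact sq_sub_one_fac _ hA
    exact this ▸ dvd_mul_right _ _
  have hrn : r ∣ p ^ n - 1 := Nat.gcd_dvd_right _ _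
  have hrd : r ∣ p ^ Nat.gcd (2 * k) n - 1 :=
    dvd_gcd_pow_sub_one hp (by omega) hn hr2k hrn
  rw [gcd_two_k_n k n hk hn hkodd] at hrd
  -- p ^ gcd k n - 1 divides p ^ k - 1
  have hdk : p ^ Nat.gcd k n - 1 ∣ p ^ k - 1 := by
    obtain ⟨c, hc⟩ := Nat.gcd_dvd_left k n
    have := Nat.sub_dvd_pow_sub_pow (p ^ Nat.gcd k n) 1 c
    rwa [← pow_mul, one_pow, ← hc] at this
  have hrk : r ∣ p ^ k - 1 := hrd.trans hdk
  have hr2 : r ∣ 2 := by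
    have := Nat.dvd_sub (Nat.gcd_dvd_left (p ^ k + 1) (p ^ n - 1)) hrk
    have h2 : p ^ k + 1 - (p ^ k - 1) = 2 := by omega
    rwa [h2] at this
  have h2r : 2 ∣ r := by
    have hpk : Odd (p ^ k) := hpodd.pow
    have hpn : Odd (p ^ n) := hpodd.pow
    refine Nat.dvd_gcd ?_ ?_
    · obtain ⟨j, hj⟩ := hpk; omega
    · obtain ⟨j, hj⟩ := hpn; omega
  exact Nat.dvd_antisymm hr2 h2r

/-- For `p % 4 = 3` and `j` odd, `(p:ℤ)^j + 1 = S * (p+1)` with `S` odd. -/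
lemma odd_factor_int (p j : ℕ) (hp : p % 2 = 1) (hj : Odd j) :
    ∃ S : ℤ, ¬ (2 ∣ S) ∧ (p : ℤ) ^ j + 1 = S * ((p : ℤ) + 1) := by
  refine ⟨∑ i ∈ Finset.range j, (p : ℤ) ^ i * (-1 : ℤ) ^ (j - 1 - i), ?_, ?_⟩
  · intro h2
    have hcast : ((∑ i ∈ Finset.range j, (p : ℤ) ^ i * (-1 : ℤ) ^ (j - 1 - i) : ℤ) : ZMod 2) = 0 :=
      (ZMod.intCast_zmod_eq_zero_iff_dvd _ 2).mpr (by exact_mod_cast h2)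
    have hp2 : ((p : ℤ) : ZMod 2) = 1 := by
      have h := ZMod.natCast_mod p 2
      rw [hp] at h
      push_cast at h ⊢
      exact h.symm
    rw [Int.cast_sum] at hcast
    have hneg : ((-1 : ℤ) : ZMod 2) = 1 := by decide
    simp only [Int.cast_mul, Int.cast_pow, hp2, hneg, one_pow, one_mul, Finset.sum_const,
      Finset.card_range, nsmul_eq_mul, mul_one] at hcast
    have hj2 := (ZMod.natCast_eq_zero_iff j 2).mp hcast
    have := Nat.odd_iff.mp hj
    omega
  · have h := geom_sum₂_mul (p : ℤ) (-1 : ℤ) j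
    rw [Odd.neg_one_pow hj, sub_neg_eq_add, sub_neg_eq_add] at h
    exact h.symm

lemma two_pow_dvd_trans (p k n a : ℕ) (hp4 : p % 4 = 3) (hk : 0 < k) (hnodd : Odd n)
    (h : 2 ^ a ∣ p ^ k + 1) : 2 ^ a ∣ p ^ n + 1 := by
  have hp2 : p % 2 = 1 := by omega
  have h4n : 4 ∣ p ^ n + 1 := by
    have := pow_mod4_odd p n hp4 hnodd
    omega
  rcases Nat.even_or_odd k with hke | hko
  · -- k even: p^k + 1 ≡ 2 mod 4, so a ≤ 1
    have h2 := pow_mod4_even p k hp4 hke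
    have ha1 : a ≤ 1 := by
      by_contra hgt
      have : 4 ∣ 2 ^ a := by
        have : (2:ℕ) ^ 2 ∣ 2 ^ a := pow_dvd_pow 2 (by omega)
        simpa using this
      have := this.trans h
      omega
    calc 2 ^ a ∣ 2 ^ 1 := pow_dvd_pow 2 ha1
    _ ∣ p ^ n + 1 := by omega
  · -- k odd: 2-part of p^k+1 equals that of p+1
    obtain ⟨S, hS2, hSfac⟩ := odd_factor_int p k hp2 hko
    have hZ : (2:ℤ) ^ a ∣ (p:ℤ) ^ k + 1 := by
      have := Int.natCast_dvd_natCast.mpr h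
      push_cast at this
      exact this
    rw [hSfac] at hZ
    have hcop : IsCoprime ((2:ℤ) ^ a) S := by
      refine IsCoprime.pow_left ?_
      rw [Int.isCoprime_iff_gcd_eq_one]
      have hg2 : (Int.gcd 2 S : ℤ) ∣ 2 := Int.gcd_dvd_left _ _
      have hgS : (Int.gcd 2 S : ℤ) ∣ S := Int.gcd_dvd_right _ _
      have hgn : Int.gcd 2 S ∣ 2 := by exact_mod_cast hg2
      rcases (Nat.dvd_prime Nat.prime_two).mp hgn with h1 | h2'
      · exact h1
      · exfalso
        apply hS2
        rw [h2'] at hgS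
        exact_mod_cast hgS
    have hdp1 : (2:ℤ) ^ a ∣ (p:ℤ) + 1 := hcop.dvd_of_dvd_mul_left hZ
    obtain ⟨S', hS'2, hS'fac⟩ := odd_factor_int p n hp2 hnodd
    have : (2:ℤ) ^ a ∣ (p:ℤ) ^ n + 1 := by
      rw [hS'fac]; exact hdp1.mul_left S'
    exact_mod_cast this

lemma gcd_dvd_q_add_one (p n k : ℕ) (hp : Nat.Prime p) (hpodd : Odd p) (hn : 0 < n)
    (hq4 : p ^ n % 4 = 3) (hk : 0 < k) (hkodd : Odd (n / Nat.gcd k n)) :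
    Nat.gcd (p ^ k + 1) (p ^ n * p ^ n - 1) ∣ p ^ n + 1 := by
  obtain ⟨hnodd, hp4⟩ := n_odd_p3 p n hpodd hn hq4
  have hp2 : 2 ≤ p := hp.two_le
  have h1n : 1 ≤ p ^ n := Nat.one_le_pow _ _ (by omega)
  have hfac : p ^ n * p ^ n - 1 = (p ^ n - 1) * (p ^ n + 1) := by
    have h := sq_sub_one_fac (p ^ n) h1n
    rw [pow_two] at h
    rw [← h, mul_comm]
  rw [Nat.dvd_iff_prime_pow_dvd_dvd]
  intro ℓ a hℓ hdvd
  have hℓp : Nat.Prime ℓ := by first | exact hℓ | exact Nat.prime_iff.mpr hℓ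
  have hd1 : ℓ ^ a ∣ p ^ k + 1 := hdvd.trans (Nat.gcd_dvd_left _ _)
  have hd2 : ℓ ^ a ∣ (p ^ n - 1) * (p ^ n + 1) := by
    rw [← hfac]; exact hdvd.trans (Nat.gcd_dvd_right _ _)
  rcases eq_or_ne ℓ 2 with rfl | hℓ2
  · exact two_pow_dvd_trans p k n a hp4 hk hnodd hd1
  · rcases Nat.eq_zero_or_pos a with rfl | ha
    · simpa using one_dvd _
    have hℓodd : ¬ ℓ ∣ p ^ n - 1 := by
      intro hc
      have hℓpk : ℓ ∣ p ^ k + 1 := (dvd_pow_self ℓ ha.ne').trans hd1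
      have : ℓ ∣ Nat.gcd (p ^ k + 1) (p ^ n - 1) := Nat.dvd_gcd hℓpk hc
      rw [gcd_pk_qsub p k n hp2 hpodd hk hn hkodd] at this
      rcases (Nat.dvd_prime Nat.prime_two).mp this with h | h
      · exact hℓp.one_lt.ne' h
      · exact hℓ2 h
    have hcop : Nat.Coprime (ℓ ^ a) (p ^ n - 1) :=
      Nat.Coprime.pow_left _ ((Nat.Prime.coprime_iff_not_dvd hℓp).mpr hℓodd)
    exact hcop.dvd_of_dvd_mul_left hd2


section FieldHelpers
variable {K : Type} [Field K] [Fintype K] [DecidableEq K]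

lemma card_pow_eq_le (g : ℕ) (hg : 0 < g) (c : K) :
    (Finset.univ.filter (fun x : K => x ^ g = c)).card ≤ g := by
  classical
  have hne : (X ^ g - C c : Polynomial K) ≠ 0 := X_pow_sub_C_ne_zero hg c
  have hsub : Finset.univ.filter (fun x : K => x ^ g = c) ⊆ (X ^ g - C c : Polynomial K).roots.toFinset := by
    intro x hx
    simp only [Finset.mem_filter, Finset.mem_univ, true_and] at hx
    rw [Multiset.mem_toFinset, Polynomial.mem_roots hne]
    simp [Polynomial.IsRoot, hx]
  calc (Finset.univ.filter (fun x : K => x ^ g = c)).card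
      ≤ (X ^ g - C c : Polynomial K).roots.toFinset.card := Finset.card_le_card hsub
    _ ≤ Multiset.card (X ^ g - C c : Polynomial K).roots := Multiset.toFinset_card_le _
    _ ≤ (X ^ g - C c : Polynomial K).natDegree := Polynomial.card_roots' _
    _ = g := by rw [Polynomial.natDegree_X_pow_sub_C]

lemma charP_of_card {p n q : ℕ} (hp : Nat.Prime p) (hn : 0 < n) (hq : q = p ^ n)
    (hcard : Fintype.card K = q ^ 2) : CharP K p := by
  have hc : CharP K (ringChar K) := ringChar.charP K
  have hdvd : (ringChar K : ℕ) ∣ Fintype.card K := by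
    classical
    have := FiniteField.cast_card_eq_zero K
    exact (CharP.cast_eq_zero_iff K (ringChar K) (Fintype.card K)).mp this
  rw [hcard, hq, ← pow_mul] at hdvd
  have hpr : (ringChar K).Prime := by
    rcases CharP.char_is_prime_or_zero K (ringChar K) with h | h
    · exact h
    · exfalso
      rw [h] at hdvd
      have := Nat.eq_zero_of_zero_dvd hdvd
      have h0 : 0 < p ^ (n * 2) := Nat.pow_pos hp.pos
      omega
  have : ringChar K = p := by
    have := hpr.dvd_of_dvd_pow hdvd
    exact (Nat.prime_dvd_prime_iff_eq hpr hp).mp this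
  rwa [this] at hc
end FieldHelpers

section CardF
variable {K : Type} [Field K] [Fintype K] [DecidableEq K]

lemma card_fixed_le (q : ℕ) (hq2 : 2 ≤ q) :
    (Finset.univ.filter (fun x : K => x ^ q = x)).card ≤ q := by
  have hsub : Finset.univ.filter (fun x : K => x ^ q = x) ⊆
      insert (0 : K) (Finset.univ.filter (fun x : K => x ^ (q - 1) = 1)) := by
    intro x hx
    simp only [Finset.mem_filter, Finset.mem_univ, true_and] at hx
    rcases eq_or_ne x 0 with rfl | hx0
    · exact Finset.mem_insert_self _ _
    · refine Finset.mem_insert_of_mem ?_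
      simp only [Finset.mem_filter, Finset.mem_univ, true_and]
      have : x ^ (q - 1) * x = 1 * x := by
        rw [← pow_succ, Nat.sub_add_cancel (by omega), one_mul, hx]
      exact mul_right_cancel₀ hx0 this
  calc (Finset.univ.filter (fun x : K => x ^ q = x)).card
      ≤ _ := Finset.card_le_card hsub
    _ ≤ (Finset.univ.filter (fun x : K => x ^ (q - 1) = 1)).card + 1 := Finset.card_insert_le _ _
    _ ≤ (q - 1) + 1 := by
        have := card_pow_eq_le (K := K) (q - 1) (by omega) 1
        omega
    _ = q := by omega

lemma card_skew_le (q : ℕ) (hq2 : 2 ≤ q) :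
    (Finset.univ.filter (fun x : K => x ^ q + x = 0)).card ≤ q := by
  have hsub : Finset.univ.filter (fun x : K => x ^ q + x = 0) ⊆
      insert (0 : K) (Finset.univ.filter (fun x : K => x ^ (q - 1) = -1)) := by
    intro x hx
    simp only [Finset.mem_filter, Finset.mem_univ, true_and] at hx
    rcases eq_or_ne x 0 with rfl | hx0
    · exact Finset.mem_insert_self _ _
    · refine Finset.mem_insert_of_mem ?_
      simp only [Finset.mem_filter, Finset.mem_univ, true_and]
      have : x ^ (q - 1) * x = (-1) * x := by
        rw [← pow_succ, Nat.sub_add_cancel (by omega), neg_one_mul]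
        linear_combination hx
      exact mul_right_cancel₀ hx0 this
  calc (Finset.univ.filter (fun x : K => x ^ q + x = 0)).card
      ≤ _ := Finset.card_le_card hsub
    _ ≤ (Finset.univ.filter (fun x : K => x ^ (q - 1) = -1)).card + 1 := Finset.card_insert_le _ _
    _ ≤ (q - 1) + 1 := by
        have := card_pow_eq_le (K := K) (q - 1) (by omega) (-1)
        omega
    _ = q := by omega

lemma ncard_setOf_eq_filter {α : Type} [Fintype α] (P : α → Prop) [DecidablePred P] :
    {x : α | P x}.ncard = (Finset.univ.filter P).card := by
  rw [Set.ncard_eq_toFinset_card', Set.toFinset_setOf]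

/-- The subfield `F = {x : x^q = x}` has exactly `q` elements. -/
lemma card_F {K : Type} [Field K] [Fintype K] [DecidableEq K]
    (q : ℕ) (hq2 : 2 ≤ q) (hcard : Fintype.card K = q ^ 2)
    (hadd : ∀ x y : K, (x + y) ^ q = x ^ q + y ^ q) :
    (Finset.univ.filter (fun x : K => x ^ q = x)).card = q := by
  classical
  have hq0 : 0 < q := by omega
  have hqq : ∀ x : K, (x ^ q) ^ q = x := by
    intro x
    rw [← pow_mul, ← pow_two, ← hcard]
    exact FiniteField.pow_card x
  set φ : K →+ K := AddMonoidHom.mk' (fun x => x ^ q - x)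
    (fun a b => by
      show (a + b) ^ q - (a + b) = (a ^ q - a) + (b ^ q - b)
      rw [hadd]; ring) with hφ
  have hker : ∀ x : K, x ∈ φ.ker ↔ x ^ q = x := by
    intro x
    rw [AddMonoidHom.mem_ker]
    show x ^ q - x = 0 ↔ _
    rw [sub_eq_zero]
  have hcard_eq : Nat.card K = Nat.card φ.range * Nat.card φ.ker := by
    rw [AddSubgroup.card_eq_card_quotient_mul_card_addSubgroup φ.ker]
    congr 1
    exact Nat.card_congr (QuotientAddGroup.quotientKerEquivRange φ).toEquiv
  have hkset : (φ.ker : Set K) = {x : K | x ^ q = x} := Set.ext hker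
  have hkercard : Nat.card φ.ker = (Finset.univ.filter (fun x : K => x ^ q = x)).card := by
    rw [← SetLike.coe_sort_coe, hkset, Nat.card_coe_set_eq, ncard_setOf_eq_filter]
  have hrange_le : Nat.card φ.range ≤ q := by
    have hneg : ∀ x : K, (-x) ^ q = -(x ^ q) := by
      intro x
      have h2 : (x + (-x)) ^ q = x ^ q + (-x) ^ q := hadd x (-x)
      simp only [add_neg_cancel] at h2
      have hz : (0 : K) ^ q = 0 := by rw [zero_pow hq0.ne']
      rw [hz] at h2
      linear_combination -h2
    have hsub : (φ.range : Set K) ⊆ {y : K | y ^ q + y = 0} := by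
      rintro y ⟨x, rfl⟩
      show ((fun x => x ^ q - x) x) ^ q + ((fun x => x ^ q - x) x) = 0
      simp only
      rw [sub_eq_add_neg, hadd, hneg, hqq]
      ring
    calc Nat.card φ.range = (φ.range : Set K).ncard := by
          rw [← SetLike.coe_sort_coe, Nat.card_coe_set_eq]
      _ ≤ ({y : K | y ^ q + y = 0}).ncard := Set.ncard_le_ncard hsub (Set.toFinite _)
      _ = (Finset.univ.filter (fun y : K => y ^ q + y = 0)).card := ncard_setOf_eq_filter _
      _ ≤ q := card_skew_le q hq2
  have hK : Nat.card K = q ^ 2 := by rw [Nat.card_eq_fintype_card, hcard]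
  have hker_le := card_fixed_le (K := K) q hq2
  rw [hK, hkercard] at hcard_eq
  have h1 : q ^ 2 ≤ q * (Finset.univ.filter (fun x : K => x ^ q = x)).card := by
    calc q ^ 2 = _ := hcard_eq
      _ ≤ q * (Finset.univ.filter (fun x : K => x ^ q = x)).card :=
        Nat.mul_le_mul_right _ hrange_le
  rw [pow_two] at h1
  have h2 : q ≤ (Finset.univ.filter (fun x : K => x ^ q = x)).card :=
    Nat.le_of_mul_le_mul_left h1 hq0
  omega

/-- Every element of `F*` is an `m`-th power in `K`, provided `gcd(m, q²-1) ∣ q+1`. -/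
lemma exists_pow_root {K : Type} [Field K] [Fintype K] [DecidableEq K]
    (q m : ℕ) (hq2 : 2 ≤ q) (hcard : Fintype.card K = q ^ 2)
    (hm : 0 < m) (hgcd : Nat.gcd m (q ^ 2 - 1) ∣ q + 1)
    (u : K) (hu0 : u ≠ 0) (hu : u ^ q = u) : ∃ s : K, s ^ m = u := by
  classical
  set N : ℕ := q ^ 2 - 1 with hN
  have hq0 : 0 < q := by omega
  have hNpos : 0 < N := by
    have : 4 ≤ q ^ 2 := by nlinarith
    omega
  have hcardU : Fintype.card Kˣ = N := by
    rw [Fintype.card_units, hcard]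
  set g : ℕ := Nat.gcd m N with hg
  have hg0 : 0 < g := Nat.gcd_pos_of_pos_left _ hm
  have hgN : g ∣ N := Nat.gcd_dvd_right _ _
  obtain ⟨w, hw⟩ := hgcd
  -- N / g = (q-1) * w
  have hNfac : N = g * ((q - 1) * w) := by
    have h1 : q ^ 2 - 1 = (q - 1) * (q + 1) := by
      have h2 : 1 ≤ q ^ 2 := Nat.one_le_pow _ _ hq0
      zify [h2, hq0.le, show 1 ≤ q by omega]
      ring
    rw [hN, h1, hw]
    ring
  have hNg : N / g = (q - 1) * w := by rw [hNfac, Nat.mul_div_cancel_left _ hg0]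
  have hNgpos : 0 < N / g := by
    rcases Nat.eq_zero_or_pos (N / g) with h | h
    · exfalso
      rw [hNfac] at hNpos
      rw [hNg] at h
      simp [h] at hNpos
    · exact h
  -- the power homomorphism
  set ψ : Kˣ →* Kˣ := powMonoidHom m with hψ
  have hcard_eq : Nat.card Kˣ = Nat.card ψ.range * Nat.card ψ.ker := by
    rw [Subgroup.card_eq_card_quotient_mul_card_subgroup ψ.ker]
    congr 1
    exact Nat.card_congr (QuotientGroup.quotientKerEquivRange ψ).toEquiv
  -- kernel is small
  have hker_le : Nat.card ψ.ker ≤ g := by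
    have hsub : (ψ.ker : Set Kˣ) ⊆ {x : Kˣ | x ^ g = 1} := by
      intro x hx
      have hxm : x ^ m = 1 := hx
      have hxN : x ^ N = 1 := by rw [← hcardU]; exact pow_card_eq_one
      have : orderOf x ∣ g := Nat.dvd_gcd (orderOf_dvd_of_pow_eq_one hxm)
        (orderOf_dvd_of_pow_eq_one hxN)
      exact orderOf_dvd_iff_pow_eq_one.mp this
    have hinj : Set.InjOn (fun x : Kˣ => (x : K)) {x : Kˣ | x ^ g = 1} :=
      fun a _ b _ h => Units.ext h
    calc Nat.card ψ.ker = (ψ.ker : Set Kˣ).ncard := by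
          rw [← SetLike.coe_sort_coe, Nat.card_coe_set_eq]
      _ ≤ ({x : Kˣ | x ^ g = 1}).ncard := Set.ncard_le_ncard hsub (Set.toFinite _)
      _ = ((fun x : Kˣ => (x : K)) '' {x : Kˣ | x ^ g = 1}).ncard :=
          (Set.ncard_image_of_injOn hinj).symm
      _ ≤ ({y : K | y ^ g = 1}).ncard := by
          apply Set.ncard_le_ncard _ (Set.toFinite _)
          rintro y ⟨x, hx, rfl⟩
          have : (x : K) ^ g = ((x ^ g : Kˣ) : K) := by push_cast; ring
          simp only [Set.mem_setOf_eq] at hx ⊢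
          rw [this, hx, Units.val_one]
      _ = (Finset.univ.filter (fun y : K => y ^ g = 1)).card := ncard_setOf_eq_filter _
      _ ≤ g := card_pow_eq_le g hg0 1
  -- range is large: card range ≥ N / g
  have hrange_ge : N / g ≤ Nat.card ψ.range := by
    have h1 : N ≤ Nat.card ψ.range * g := by
      calc N = Nat.card Kˣ := by rw [Nat.card_eq_fintype_card, hcardU]
        _ = Nat.card ψ.range * Nat.card ψ.ker := hcard_eq
        _ ≤ Nat.card ψ.range * g := Nat.mul_le_mul_left _ hker_le
    calc N / g ≤ (Nat.card ψ.range * g) / g := Nat.div_le_div_right h1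
      _ = Nat.card ψ.range := Nat.mul_div_cancel _ hg0
  -- range consists exactly of the (N/g)-th roots of unity
  have hrange_sub : (ψ.range : Set Kˣ) ⊆ {x : Kˣ | x ^ (N / g) = 1} := by
    rintro x ⟨s, rfl⟩
    show (s ^ m) ^ (N / g) = 1
    have hgm : g ∣ m := Nat.gcd_dvd_left _ _
    obtain ⟨m', hm'⟩ := hgm
    have hgNd : g * (N / g) = N := Nat.mul_div_cancel' hgN
    have hstep : (s ^ m) ^ (N / g) = (s ^ N) ^ m' := by
      rw [← pow_mul, ← pow_mul, hm', mul_comm g m', mul_assoc, hgNd, mul_comm m' N]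
    rw [hstep, show s ^ N = 1 by rw [← hcardU]; exact pow_card_eq_one, one_pow]
  have hW_le : ({x : Kˣ | x ^ (N / g) = 1}).ncard ≤ N / g := by
    have hinj : Set.InjOn (fun x : Kˣ => (x : K)) {x : Kˣ | x ^ (N / g) = 1} :=
      fun a _ b _ h => Units.ext h
    calc ({x : Kˣ | x ^ (N / g) = 1}).ncard
        = ((fun x : Kˣ => (x : K)) '' {x : Kˣ | x ^ (N / g) = 1}).ncard :=
          (Set.ncard_image_of_injOn hinj).symm
      _ ≤ ({y : K | y ^ (N / g) = 1}).ncard := by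
          apply Set.ncard_le_ncard _ (Set.toFinite _)
          rintro y ⟨x, hx, rfl⟩
          simp only [Set.mem_setOf_eq] at hx ⊢
          have : (x : K) ^ (N / g) = ((x ^ (N / g) : Kˣ) : K) := by push_cast; ring
          rw [this, hx, Units.val_one]
      _ = (Finset.univ.filter (fun y : K => y ^ (N / g) = 1)).card := ncard_setOf_eq_filter _
      _ ≤ N / g := card_pow_eq_le _ hNgpos 1
  have hrange_card : (ψ.range : Set Kˣ).ncard = Nat.card ψ.range := by
    rw [← SetLike.coe_sort_coe, Nat.card_coe_set_eq]
  have hseteq : (ψ.range : Set Kˣ) = {x : Kˣ | x ^ (N / g) = 1} := by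
    apply Set.eq_of_subset_of_ncard_le hrange_sub _ (Set.toFinite _)
    calc ({x : Kˣ | x ^ (N / g) = 1}).ncard ≤ N / g := hW_le
      _ ≤ Nat.card ψ.range := hrange_ge
      _ = (ψ.range : Set Kˣ).ncard := hrange_card.symm
  -- now u, as a unit, is an (N/g)-th root of unity
  set ux : Kˣ := Units.mk0 u hu0 with hux
  have huq : u ^ (q - 1) = 1 := by
    have h1 : u ^ (q - 1) * u = 1 * u := by
      rw [← pow_succ, Nat.sub_add_cancel (by omega), one_mul, hu]
    exact mul_right_cancel₀ hu0 h1
  have huW : ux ∈ {x : Kˣ | x ^ (N / g) = 1} := by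
    show ux ^ (N / g) = 1
    have hval : (ux : K) ^ (N / g) = 1 := by
      rw [hux, Units.val_mk0, hNg, pow_mul, huq, one_pow]
    ext
    rw [Units.val_pow_eq_pow_val, Units.val_one]
    exact hval
  rw [← hseteq] at huW
  obtain ⟨s, hs⟩ := huW
  refine ⟨(s : K), ?_⟩
  have := congrArg (fun x : Kˣ => (x : K)) hs
  simpa [hψ, hux] using this

/-- Central counting lemma: fibers of `y ↦ b y^m + (b y^m)^q` over `F`. -/
lemma fiber_count {K : Type} [Field K] [Fintype K] [DecidableEq K]
    (q : ℕ) (hq2 : 2 ≤ q) (hq4 : q % 4 = 3) (hcard : Fintype.card K = q ^ 2)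
    (hadd : ∀ x y : K, (x + y) ^ q = x ^ q + y ^ q)
    (hchar2 : ringChar K ≠ 2)
    (m : ℕ) (hmE : Even m) (hm0 : 0 < m) (hgcd : Nat.gcd m (q ^ 2 - 1) ∣ q + 1)
    (b : K) (hb0 : b ≠ 0) (hbns : ¬ IsSquare b)
    (e : K) (he : e ^ q = e) :
    {y : K | b * y ^ m + (b * y ^ m) ^ q = e}.ncard = if e = 0 then 1 else q + 1 := by
  classical
  have hq0 : 0 < q := by omega
  have hqq : ∀ x : K, (x ^ q) ^ q = x := by
    intro x
    rw [← pow_mul, ← pow_two, ← hcard]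
    exact FiniteField.pow_card x
  set T : K → K := fun y => b * y ^ m + (b * y ^ m) ^ q with hT
  -- `T` takes values in `F`
  have hTF : ∀ y : K, (T y) ^ q = T y := by
    intro y
    rw [hT]
    simp only
    rw [hadd, hqq, add_comm]
  -- the zero fiber is `{0}`
  have hfib0 : {y : K | T y = 0} = {0} := by
    ext y
    simp only [Set.mem_setOf_eq, Set.mem_singleton_iff]
    constructor
    · intro hy
      by_contra hy0
      set w : K := b * y ^ m with hw
      have hw0 : w ≠ 0 := mul_ne_zero hb0 (pow_ne_zero _ hy0)
      have hwq : w ^ q = -w := by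
        have : w + w ^ q = 0 := hy
        linear_combination this
      -- w is a square
      have hwm1 : w ^ (q - 1) = -1 := by
        have h1 : w ^ (q - 1) * w = (-1) * w := by
          rw [← pow_succ, Nat.sub_add_cancel (by omega), neg_one_mul]
          calc w ^ q = -w := hwq
            _ = -w := rfl
        exact mul_right_cancel₀ hw0 h1
      obtain ⟨c, hc⟩ : ∃ c, q + 1 = 2 * c := ⟨(q + 1) / 2, by omega⟩
      have hceven : Even c := by
        refine Nat.even_iff.mpr ?_
        omega
      have hexp : Fintype.card K / 2 = (q - 1) * c := by
        rw [hcard]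
        have hqodd : q % 2 = 1 := by omega
        have hq2odd : q ^ 2 % 2 = 1 := by
          rw [Nat.pow_mod, hqodd, one_pow]
          omega
        have hfac : q ^ 2 - 1 = (q - 1) * (q + 1) := by
          zify [Nat.one_le_pow _ _ hq0, show 1 ≤ q by omega]
          ring
        rw [show q ^ 2 / 2 = (q ^ 2 - 1) / 2 by omega, hfac, hc]
        rw [show (q - 1) * (2 * c) = 2 * ((q - 1) * c) by ring]
        exact Nat.mul_div_cancel_left _ (by omega)
      have hsq : IsSquare w := by
        rw [FiniteField.isSquare_iff hchar2 hw0, hexp, pow_mul, hwm1,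
          (hceven.neg_one_pow : (-1 : K) ^ c = 1)]
      -- but w = b * (y^t)^2 with b a nonsquare
      obtain ⟨t, ht⟩ := hmE
      obtain ⟨r, hr⟩ := hsq
      apply hbns
      have hyt : y ^ t ≠ 0 := pow_ne_zero _ hy0
      refine ⟨r / y ^ t, ?_⟩
      have hym : y ^ m = y ^ t * y ^ t := by rw [← pow_add, ht]
      rw [div_mul_div_comm, ← hr, hw, hym, mul_div_assoc,
        div_self (mul_ne_zero hyt hyt), mul_one]
    · intro hy
      rw [hy]
      show b * (0 : K) ^ m + (b * (0 : K) ^ m) ^ q = 0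
      rw [zero_pow hm0.ne', mul_zero, zero_pow hq0.ne', add_zero]
  have hV0 : (0 : K) ^ q = 0 := zero_pow hq0.ne'
  -- equal fibers over nonzero elements of F
  have hfib_eq : ∀ e₁ e₂ : K, e₁ ^ q = e₁ → e₂ ^ q = e₂ → e₁ ≠ 0 → e₂ ≠ 0 →
      (Finset.univ.filter (fun y : K => T y = e₁)).card =
      (Finset.univ.filter (fun y : K => T y = e₂)).card := by
    intro e₁ e₂ he₁ he₂ h1 h2
    set u : K := e₂ * e₁⁻¹ with hu
    have hu0 : u ≠ 0 := mul_ne_zero h2 (inv_ne_zero h1)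
    have huF : u ^ q = u := by
      rw [hu, mul_pow, inv_pow, he₂, he₁]
    obtain ⟨s, hs⟩ := exists_pow_root q m hq2 hcard hm0 hgcd u hu0 huF
    have hs0 : s ≠ 0 := by
      intro h
      rw [h, zero_pow hm0.ne'] at hs
      exact hu0 hs.symm
    have hmap : ∀ y : K, T (s * y) = u * T y := by
      intro y
      show b * (s * y) ^ m + (b * (s * y) ^ m) ^ q
        = u * (b * y ^ m + (b * y ^ m) ^ q)
      have h1 : b * (s * y) ^ m = u * (b * y ^ m) := by
        rw [mul_pow, hs]; ring
      rw [h1, mul_pow, huF, mul_add]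
    apply Finset.card_bij' (fun y _ => s * y) (fun y _ => s⁻¹ * y)
    · intro y hy
      simp only [Finset.mem_filter, Finset.mem_univ, true_and] at hy ⊢
      rw [hmap, hy, hu]
      field_simp
    · intro y hy
      simp only [Finset.mem_filter, Finset.mem_univ, true_and] at hy ⊢
      have : T (s * (s⁻¹ * y)) = u * T (s⁻¹ * y) := hmap _
      rw [← mul_assoc, mul_inv_cancel₀ hs0, one_mul] at this
      rw [hy] at this
      -- e₂ = u * T (s⁻¹ * y)  ⟹  T(s⁻¹ y) = e₁
      have : T (s⁻¹ * y) = u⁻¹ * e₂ := by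
        rw [this]
        field_simp
      rw [this, hu]
      field_simp
    · intro y _
      rw [← mul_assoc, inv_mul_cancel₀ hs0, one_mul]
    · intro y _
      rw [← mul_assoc, mul_inv_cancel₀ hs0, one_mul]
  -- partition of K by the values of T
  set V : Finset K := Finset.univ.filter (fun x : K => x ^ q = x) with hV
  have hVcard : V.card = q := card_F q hq2 hcard hadd
  have hpart : ∑ v ∈ V, (Finset.univ.filter (fun y : K => T y = v)).card = q ^ 2 := by
    have h := Finset.card_eq_sum_card_fiberwise (s := Finset.univ) (t := V) (f := T)
      (fun y _ => by simp [hV, hTF y])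
    rw [← h, Finset.card_univ, hcard]
  rcases eq_or_ne e 0 with rfl | he0
  · simp only [if_pos rfl]
    rw [show {y : K | T y = 0} = {0} from hfib0]
    exact Set.ncard_singleton 0
  · simp only [if_neg he0]
    have h0V : (0 : K) ∈ V := by simp [hV, hV0]
    have hsum : (Finset.univ.filter (fun y : K => T y = 0)).card
        + ∑ v ∈ V.erase 0, (Finset.univ.filter (fun y : K => T y = v)).card = q ^ 2 := by
      rw [← Finset.add_sum_erase V
        (fun v => (Finset.univ.filter (fun y : K => T y = v)).card) h0V] at hpart
      exact hpart
    have hfz : (Finset.univ.filter (fun y : K => T y = 0)).card = 1 := by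
      have hfeq : Finset.univ.filter (fun y : K => T y = 0) = {0} := by
        ext y
        simp only [Finset.mem_filter, Finset.mem_univ, true_and, Finset.mem_singleton]
        have hext := Set.ext_iff.mp hfib0 y
        simpa [Set.mem_setOf_eq] using hext
      rw [hfeq, Finset.card_singleton]
    have hconst : ∀ v ∈ V.erase 0, (Finset.univ.filter (fun y : K => T y = v)).card
        = (Finset.univ.filter (fun y : K => T y = e)).card := by
      intro v hv
      obtain ⟨hv0, hvV⟩ := Finset.mem_erase.mp hv
      refine hfib_eq v e ?_ he hv0 he0
      simpa [hV] using hvV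
    rw [hfz, Finset.sum_congr rfl hconst, Finset.sum_const,
      Finset.card_erase_of_mem h0V, hVcard, smul_eq_mul] at hsum
    have hfac : q ^ 2 - 1 = (q - 1) * (q + 1) := by
      zify [Nat.one_le_pow _ _ hq0, show 1 ≤ q by omega]
      ring
    have hmul : (q - 1) * (Finset.univ.filter (fun y : K => T y = e)).card
        = (q - 1) * (q + 1) := by omega
    have hcres : (Finset.univ.filter (fun y : K => T y = e)).card = q + 1 :=
      Nat.eq_of_mul_eq_mul_left (by omega) hmul
    rw [show {y : K | T y = e}.ncard
        = (Finset.univ.filter (fun y : K => T y = e)).card from ncard_setOf_eq_filter _, hcres]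



/-- The point set of the shift plane `Π(f)`: affine points `(x,y)`, points at
infinity `(a)` for `a ∈ K`, and the point `(∞)`. -/
abbrev ShiftPt (K : Type) : Type := (K × K) ⊕ (K ⊕ Unit)

/-- The affine line `L_{a,b} = {(x, f(x+a) − b) : x ∈ K} ∪ {(a)}` of the shift plane. -/
def affLine (K : Type) [Field K] (f : K → K) (a b : K) : Set (ShiftPt K) :=
  {P | (∃ x : K, P = Sum.inl (x, f (x + a) - b)) ∨ P = Sum.inr (Sum.inl a)}

/-- The vertical line `N_a = {(a,y) : y ∈ K} ∪ {(∞)}` of the shift plane. -/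
def vertLine (K : Type) [Field K] (a : K) : Set (ShiftPt K) :=
  {P | (∃ y : K, P = Sum.inl (a, y)) ∨ P = Sum.inr (Sum.inr ())}

/-- The line at infinity of the shift plane. -/
def lineAtInf (K : Type) : Set (ShiftPt K) :=
  {P | ∃ s : K ⊕ Unit, P = Sum.inr s}

/-- The set of all lines of the shift plane `Π(f)`. -/
def shiftLines (K : Type) [Field K] (f : K → K) : Set (Set (ShiftPt K)) :=
  {L | (∃ a b : K, L = affLine K f a b) ∨ (∃ a : K, L = vertLine K a) ∨ L = lineAtInf K}

/-- The set `θF = {tθ : t ∈ F}`, where `F = {t : t^q = t}` is the subfield of order `q`. -/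
def scalarSet (K : Type) [Field K] (q : ℕ) (θ : K) : Set K :=
  {c | ∃ t : K, t ^ q = t ∧ c = t * θ}

/-- The point set `U_θ = {(x, tθ) : x ∈ K, t ∈ F} ∪ {(∞)}`. -/
def unitalSet (K : Type) [Field K] (q : ℕ) (θ : K) : Set (ShiftPt K) :=
  {P | (∃ x t : K, t ^ q = t ∧ P = Sum.inl (x, t * θ)) ∨ P = Sum.inr (Sum.inr ())}

/-- Theorem 2.5 (e).  Let `q = pⁿ ≡ 3 (mod 4)`, `0 < k < n` with
`n/gcd(k,n)` odd, `b` a nonzero nonsquare in `K = F_{q²}`, `ξ ∈ K \ F`, and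
`f(x) = bx^{p^k+1} + (bx^{p^k+1})^q + ξx^{q+1}` (Budaghyan–Helleseth).  Then for
all `a c` the number of `x` with `f(x+a) − c ∈ ξF` is `1` if `c ∈ ξF` and `q+1`
otherwise; hence `U_ξ` is a unital in `Π(f)`.  In particular, for `a ∈ F` the
number of `y` with `by² + (by²)^q = a` is `q+1` if `a ≠ 0` and `1` if `a = 0`. -/
theorem stmt9 (p n q : ℕ) (hp : Nat.Prime p) (hpodd : Odd p) (hn : 0 < n) (hq : q = p ^ n)
    (hq4 : q % 4 = 3)
    (K : Type) [Field K] [Fintype K] (hcard : Fintype.card K = q ^ 2)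
    (k : ℕ) (hk0 : 0 < k) (hkn : k < n) (hkodd : Odd (n / Nat.gcd k n))
    (b : K) (hb0 : b ≠ 0) (hbns : ¬ IsSquare b)
    (ξ : K) (hξ : ξ ^ q ≠ ξ)
    (f : K → K)
    (hf : ∀ x : K,
      f x = b * x ^ (p ^ k + 1) + (b * x ^ (p ^ k + 1)) ^ q + ξ * x ^ (q + 1)) :
    (∀ a c : K,
      (c ∈ scalarSet K q ξ → {x : K | f (x + a) - c ∈ scalarSet K q ξ}.ncard = 1) ∧
      (c ∉ scalarSet K q ξ → {x : K | f (x + a) - c ∈ scalarSet K q ξ}.ncard = q + 1)) ∧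
    (∀ L ∈ shiftLines K f,
      (L ∩ unitalSet K q ξ).ncard = 1 ∨ (L ∩ unitalSet K q ξ).ncard = q + 1) ∧
    (∀ a : K, a ^ q = a →
      ((a ≠ 0 → {y : K | b * y ^ 2 + (b * y ^ 2) ^ q = a}.ncard = q + 1) ∧
       (a = 0 → {y : K | b * y ^ 2 + (b * y ^ 2) ^ q = a}.ncard = 1))) := by
  classical
  have hq2 : 2 ≤ q := by omega
  have hq0 : 0 < q := by omega
  -- characteristic and Frobenius additivity
  haveI hfp : Fact p.Prime := ⟨hp⟩
  haveI hcharp : CharP K p := charP_of_card hp hn hq hcard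
  have hadd : ∀ x y : K, (x + y) ^ q = x ^ q + y ^ q := by
    intro x y
    rw [hq]
    have h := map_add (iterateFrobenius K p n) x y
    rwa [iterateFrobenius_def, iterateFrobenius_def, iterateFrobenius_def] at h
  have hneg : ∀ x : K, (-x) ^ q = -(x ^ q) := by
    intro x
    have h2 : (x + (-x)) ^ q = x ^ q + (-x) ^ q := hadd x (-x)
    simp only [add_neg_cancel] at h2
    rw [zero_pow hq0.ne'] at h2
    linear_combination -h2
  have hchar2 : ringChar K ≠ 2 := by
    have hrc : ringChar K = p := ringChar.eq K p
    have : p % 2 = 1 := Nat.odd_iff.mp hpodd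
    omega
  have hqq : ∀ x : K, (x ^ q) ^ q = x := by
    intro x
    rw [← pow_mul, ← pow_two, ← hcard]
    exact FiniteField.pow_card x
  have hξ0 : ξ ≠ 0 := by
    intro h
    apply hξ
    rw [h, zero_pow hq0.ne']
  have hξd : ξ ^ q - ξ ≠ 0 := sub_ne_zero.mpr hξ
  -- membership in ξF
  have hmem : ∀ z : K, z ∈ scalarSet K q ξ ↔ z * ξ ^ q = z ^ q * ξ := by
    intro z
    constructor
    · rintro ⟨t, ht, rfl⟩
      rw [mul_pow, ht]
      ring
    · intro h
      have hξq0 : ξ ^ q ≠ 0 := pow_ne_zero _ hξ0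
      refine ⟨z * ξ⁻¹, ?_, ?_⟩
      · rw [mul_pow, inv_pow, inv_eq_one_div, inv_eq_one_div, mul_one_div, mul_one_div,
          div_eq_div_iff hξq0 hξ0]
        linear_combination -h
      · field_simp
  -- the F-component to hit
  set γ : K → K := fun c => (c * ξ ^ q - c ^ q * ξ) / (ξ ^ q - ξ) with hγ
  have hγF : ∀ c : K, (γ c) ^ q = γ c := by
    intro c
    have hnum : (c * ξ ^ q - c ^ q * ξ) ^ q = -(c * ξ ^ q - c ^ q * ξ) := by
      rw [sub_eq_add_neg, hadd, hneg, mul_pow, mul_pow, hqq, hqq]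
      ring
    have hden : (ξ ^ q - ξ) ^ q = -(ξ ^ q - ξ) := by
      rw [sub_eq_add_neg, hadd, hneg, hqq]
      ring
    rw [hγ]
    simp only
    rw [div_pow, hnum, hden, neg_div_neg_eq]
  have hγ0 : ∀ c : K, (γ c = 0 ↔ c ∈ scalarSet K q ξ) := by
    intro c
    rw [hmem, hγ]
    simp only
    rw [_root_.div_eq_zero_iff]
    constructor
    · rintro (h | h)
      · linear_combination h
      · exact absurd h hξd
    · intro h
      left
      linear_combination h
  set M : ℕ := p ^ k + 1 with hM
  have hM0 : 0 < M := by positivity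
  have hMeven : Even M := (hpodd.pow).add_one
  have hMgcd : Nat.gcd M (q ^ 2 - 1) ∣ q + 1 := by
    have := gcd_dvd_q_add_one p n k hp hpodd hn (by rw [← hq]; exact hq4) hk0 hkodd
    rw [hM, hq, pow_two]
    exact this
  -- the key equivalence
  have hiff : ∀ c y : K, (f y - c ∈ scalarSet K q ξ ↔ b * y ^ M + (b * y ^ M) ^ q = γ c) := by
    intro c y
    rw [hmem]
    set A : K := b * y ^ M + (b * y ^ M) ^ q with hA
    have hAF : A ^ q = A := by rw [hA, hadd, hqq, add_comm]
    have hNm : (y ^ (q + 1)) ^ q = y ^ (q + 1) := by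
      have hyq : y ^ q ^ 2 = y := by rw [← hcard]; exact FiniteField.pow_card y
      rw [← pow_mul, show (q + 1) * q = q ^ 2 + q by ring, pow_add, hyq, ← pow_succ']
    have hfz : f y - c = A + ξ * y ^ (q + 1) - c := by rw [hf y, hA]
    have hzq : (f y - c) ^ q = A + ξ ^ q * y ^ (q + 1) - c ^ q := by
      rw [hfz, sub_eq_add_neg, hadd, hadd, hneg, mul_pow, hAF, hNm]
      ring
    constructor
    · intro h
      have h' : (A + ξ * y ^ (q + 1) - c) * ξ ^ q = (A + ξ ^ q * y ^ (q + 1) - c ^ q) * ξ := by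
        rw [← hfz, ← hzq]
        exact h
      rw [hγ]
      simp only
      rw [eq_div_iff hξd]
      linear_combination h'
    · intro h
      have h' : A * (ξ ^ q - ξ) = c * ξ ^ q - c ^ q * ξ := by
        rw [hγ] at h
        simp only at h
        rw [eq_div_iff hξd] at h
        exact h
      rw [hzq, hfz]
      linear_combination h'
  -- counting for each a, c
  have hcount : ∀ a c : K, {x : K | f (x + a) - c ∈ scalarSet K q ξ}.ncard
      = if γ c = 0 then 1 else q + 1 := by
    intro a c
    have hset1 : {x : K | f (x + a) - c ∈ scalarSet K q ξ}
        = (fun y : K => y - a) '' {y : K | b * y ^ M + (b * y ^ M) ^ q = γ c} := by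
      ext x
      simp only [Set.mem_image, Set.mem_setOf_eq]
      constructor
      · intro h
        exact ⟨x + a, (hiff c (x + a)).mp h, by ring⟩
      · rintro ⟨y, hy, rfl⟩
        have : y - a + a = y := by ring
        rw [this]
        exact (hiff c y).mpr hy
    rw [hset1, Set.ncard_image_of_injective _ sub_left_injective]
    exact fiber_count q hq2 hq4 hcard hadd hchar2 M hMeven hM0 hMgcd b hb0 hbns (γ c) (hγF c)
  refine ⟨?_, ?_, ?_⟩
  · -- bullet 1
    intro a c
    constructor
    · intro hc
      rw [hcount a c, if_pos ((hγ0 c).mpr hc)]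
    · intro hc
      rw [hcount a c, if_neg (fun h => hc ((hγ0 c).mp h))]
  · -- bullet 2 : lines meet the unital in 1 or q+1 points
    rintro L (⟨a, b', rfl⟩ | ⟨a, rfl⟩ | rfl)
    · -- affine line
      have haff : affLine K f a b' ∩ unitalSet K q ξ =
          (fun x : K => (Sum.inl (x, f (x + a) - b') : ShiftPt K)) ''
            {x : K | f (x + a) - b' ∈ scalarSet K q ξ} := by
        ext P
        constructor
        · rintro ⟨hP1, hP2⟩
          rcases hP1 with ⟨x, rfl⟩ | rfl
          · rcases hP2 with ⟨x', t, ht, heq⟩ | heq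
            · refine ⟨x, ?_, rfl⟩
              have h1 : x = x' ∧ f (x + a) - b' = t * ξ := by
                simpa [Prod.ext_iff] using heq
              exact ⟨t, ht, h1.2⟩
            · simp at heq
          · rcases hP2 with ⟨x', t, ht, heq⟩ | heq
            · simp at heq
            · simp at heq
        · rintro ⟨x, hx, rfl⟩
          obtain ⟨t, ht, hfx⟩ := hx
          exact ⟨Or.inl ⟨x, rfl⟩, Or.inl ⟨x, t, ht, by simp [hfx]⟩⟩
      have hinj : Function.Injective
          (fun x : K => (Sum.inl (x, f (x + a) - b') : ShiftPt K)) := by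
        intro x y h
        simp only [Sum.inl.injEq, Prod.mk.injEq] at h
        exact h.1
      rw [haff, Set.ncard_image_of_injective _ hinj, hcount a b']
      rcases eq_or_ne (γ b') 0 with h | h
      · left; rw [if_pos h]
      · right; rw [if_neg h]
    · -- vertical line
      right
      have hvert : vertLine K a ∩ unitalSet K q ξ =
          ((fun t : K => (Sum.inl (a, t * ξ) : ShiftPt K)) '' {t : K | t ^ q = t})
          ∪ {Sum.inr (Sum.inr ())} := by
        ext P
        constructor
        · rintro ⟨hP1, hP2⟩
          rcases hP1 with ⟨y, rfl⟩ | rfl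
          · rcases hP2 with ⟨x', t, ht, heq⟩ | heq
            · left
              have h1 : a = x' ∧ y = t * ξ := by
                simpa [Prod.ext_iff] using heq
              exact ⟨t, ht, by simp [h1.2]⟩
            · simp at heq
          · right; rfl
        · rintro (⟨t, ht, rfl⟩ | hP)
          · exact ⟨Or.inl ⟨t * ξ, rfl⟩, Or.inl ⟨a, t, ht, rfl⟩⟩
          · rw [Set.mem_singleton_iff] at hP
            subst hP
            exact ⟨Or.inr rfl, Or.inr rfl⟩
      have hinj : Function.Injective (fun t : K => (Sum.inl (a, t * ξ) : ShiftPt K)) := by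
        intro t t' h
        simp only [Sum.inl.injEq, Prod.mk.injEq] at h
        exact mul_right_cancel₀ hξ0 h.2
      have hdisj : Disjoint
          ((fun t : K => (Sum.inl (a, t * ξ) : ShiftPt K)) '' {t : K | t ^ q = t})
          ({Sum.inr (Sum.inr ())} : Set (ShiftPt K)) := by
        rw [Set.disjoint_left]
        rintro P ⟨t, _, rfl⟩ hP
        simp at hP
      rw [hvert, Set.ncard_union_eq hdisj (Set.toFinite _) (Set.toFinite _),
        Set.ncard_image_of_injective _ hinj, Set.ncard_singleton]
      have hFq : {t : K | t ^ q = t}.ncard = q := by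
        rw [ncard_setOf_eq_filter]
        exact card_F q hq2 hcard hadd
      rw [hFq]
    · -- line at infinity
      left
      have hinf : lineAtInf K ∩ unitalSet K q ξ = {Sum.inr (Sum.inr ())} := by
        ext P
        constructor
        · rintro ⟨⟨s, rfl⟩, hP2⟩
          rcases hP2 with ⟨x, t, ht, heq⟩ | heq
          · simp at heq
          · rw [heq]; rfl
        · rintro rfl
          exact ⟨⟨Sum.inr (), rfl⟩, Or.inr rfl⟩
      rw [hinf, Set.ncard_singleton]
  · -- bullet 3
    intro a ha
    have h2gcd : Nat.gcd 2 (q ^ 2 - 1) ∣ q + 1 := by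
      have hq2odd : q ^ 2 % 2 = 1 := by
        have hqodd : q % 2 = 1 := by omega
        rw [Nat.pow_mod, hqodd, one_pow]
        omega
      have : Nat.gcd 2 (q ^ 2 - 1) = 2 := Nat.gcd_eq_left (by omega)
      rw [this]
      omega
    have hres := fiber_count q hq2 hq4 hcard hadd hchar2 2 (by decide) (by omega) h2gcd
      b hb0 hbns a ha
    constructor
    · intro ha0
      rw [hres, if_neg ha0]
    · intro ha0
      rw [hres, if_pos ha0]
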